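/- Let q be a prime power, s(x) = x^q + x (the trace map of F_{q^2} onto F_q), and let g(x) = x^m + Σ_{i=2}^{m-1} a_i x^i with all a_i ∈ F_q and m ≥ 2. Let L be a rank 2 linearized polynomial of F_{q^2} that maps the kernel of s into F_q. Then f(x) = g(s(x)) + L(x) is a bijection of F_{q^2}. -/
import Mathlib


/-- Let `s(x) = x^q + x` (the trace of `F_{q^2}` onto `F_q`) and
`g(x) = x^m + Σ_{i=2}^{m-1} a_i x^i` with all `a_i ∈ F_q` and `m ≥ 2`. Let
`L(x) = αx^q + βx` be a rank 2 linearized polynomial mapping `ker s` into `F_q`.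
Then `f(x) = g(s(x)) + L(x)` is a bijection of `F_{q^2}`. -/
theorem stmt_13 (q : ℕ) (hq : IsPrimePow q)
    (F : Type) [Field F] [Fintype F] (hF : Fintype.card F = q ^ 2)
    (m : ℕ) (hm : 2 ≤ m)
    (a : ℕ → F) (ha : ∀ i, (a i) ^ q = a i)
    (α β : F) (hrank2 : β ^ (q + 1) ≠ α ^ (q + 1))
    (L : F → F) (hL : L = fun x : F => α * x ^ q + β * x)
    (hker : ∀ u : F, u ^ q + u = 0 → (L u) ^ q = L u) :
    Function.Bijective (fun x : F =>
      (x ^ q + x) ^ m + (∑ i ∈ Finset.Ico 2 m, a i * (x ^ q + x) ^ i) + L x) := by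
  classical
  obtain ⟨p, k, hpp, hk, hpk⟩ := hq
  have hp' : p.Prime := Nat.prime_iff.mpr hpp
  haveI : Fact p.Prime := ⟨hp'⟩
  have hq2 : 2 ≤ q := by
    rw [← hpk]
    calc 2 ≤ p := hp'.two_le
      _ ≤ p ^ k := Nat.le_self_pow (by omega) p
  -- characteristic
  have hpF : (p : F) = 0 := by
    have h := FiniteField.cast_card_eq_zero F
    rw [hF] at h
    have hq0 : (q : F) = 0 := by
      have h2 : ((q : F)) ^ 2 = 0 := by exact_mod_cast h
      exact pow_eq_zero_iff two_ne_zero |>.mp h2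
    rw [← hpk] at hq0
    have h3 : ((p : F)) ^ k = 0 := by exact_mod_cast hq0
    exact pow_eq_zero_iff (by omega) |>.mp h3
  haveI hcharF : CharP F p := by
    have hdvd : ringChar F ∣ p := (ringChar.dvd hpF)
    have hrc : ringChar F = p :=
      ((Nat.prime_dvd_prime_iff_eq (CharP.char_is_prime F (ringChar F)) hp').mp hdvd)
    exact ringChar.of_eq hrc
  -- Frobenius ring hom
  have hadd : ∀ x y : F, (x + y) ^ q = x ^ q + y ^ q := by
    intro x y; rw [← hpk]; exact add_pow_char_pow x y p k
  let φ : F →+* F :=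
    { toFun := fun x => x ^ q
      map_one' := one_pow q
      map_mul' := fun x y => mul_pow x y q
      map_zero' := zero_pow (by positivity)
      map_add' := hadd }
  have hφ : ∀ x : F, φ x = x ^ q := fun _ => rfl
  have hQQ : ∀ x : F, (x ^ q) ^ q = x := by
    intro x
    rw [← pow_mul, ← sq, ← hF]
    exact FiniteField.pow_card x
  have hsub : ∀ x y : F, (x - y) ^ q = x ^ q - y ^ q := fun x y => map_sub φ x y
  -- existence of a nonzero kernel element of s
  obtain ⟨x0, hx0⟩ : ∃ x : F, x ^ q ≠ x := by
    obtain ⟨g, hg⟩ := IsCyclic.exists_generator (α := Fˣ)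
    refine ⟨(g : F), fun hgq => ?_⟩
    have hgu : g ^ q = g := Units.ext (by push_cast; exact hgq)
    have h1 : g ^ (q - 1) = 1 := by
      have : g ^ (q - 1) * g = 1 * g := by
        rw [one_mul, ← pow_succ]
        rw [Nat.sub_add_cancel (by omega)]
        exact hgu
      exact mul_right_cancel this
    have hord : orderOf g ∣ q - 1 := orderOf_dvd_of_pow_eq_one h1
    have hordg : orderOf g = q ^ 2 - 1 := by
      rw [orderOf_eq_card_of_forall_mem_zpowers hg, Nat.card_eq_fintype_card,
        Fintype.card_units, hF]
    have hle : q ^ 2 - 1 ≤ q - 1 := Nat.le_of_dvd (by omega) (hordg ▸ hord)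
    have : q ^ 2 ≤ q := by omega
    nlinarith
  have hsnotinj : ¬ Function.Injective (fun x : F => x ^ q + x) := by
    intro hinj
    obtain ⟨y, hy⟩ := Finite.injective_iff_surjective.mp hinj x0
    apply hx0
    have : (y ^ q + y) ^ q = y ^ q + y := by rw [hadd, hQQ]; ring
    rw [← hy]; exact this
  obtain ⟨x1, y1, hxy1, hne1⟩ : ∃ x1 y1 : F, x1 ^ q + x1 = y1 ^ q + y1 ∧ x1 ≠ y1 := by
    by_contra h
    push_neg at h
    exact hsnotinj fun u v huv => h u v huv
  set w : F := x1 - y1 with hwdef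
  have hwne : w ≠ 0 := sub_ne_zero.mpr hne1
  have hwK : w ^ q = -w := by
    rw [hwdef, hsub]
    have : x1 ^ q - y1 ^ q = -(x1 - y1) := by
      have := hxy1; linear_combination this
    rw [this]
  -- key identity from hker
  have hE : α ^ q + α = β ^ q + β := by
    have h := hker w (by rw [hwK]; ring)
    rw [hL] at h
    simp only at h
    rw [hwK] at h
    have hlhs : (α * -w + β * w) ^ q = ((β - α) * w) ^ q := by congr 1; ring
    rw [hlhs, mul_pow, hsub, hwK] at h
    -- h : (β^q - α^q) * (-w) = α * -w + β * w
    have h2 : (β ^ q - α ^ q) * -w = (β - α) * w := by rw [h]; ring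
    have h3 : (α ^ q - β ^ q) * w = (β - α) * w := by linear_combination h2
    have h4 : α ^ q - β ^ q = β - α := mul_right_cancel₀ hwne h3
    linear_combination h4
  have hβqα : β ^ q - α ≠ 0 := by
    intro h
    apply hrank2
    have hα : α = β ^ q := by linear_combination -h
    calc β ^ (q + 1) = β ^ q * β := by rw [pow_succ]
      _ = α ^ q * α := by rw [hα, hQQ]; ring
      _ = α ^ (q + 1) := by rw [pow_succ]
  have key : ∀ u : F, (L u) ^ q = L u → u ^ q + u = 0 := by
    intro u h
    rw [hL] at h
    simp only at h
    rw [hadd, mul_pow, mul_pow, hQQ] at h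
    -- h : α^q * u + β^q * u^q = α * u^q + β * u
    have h2 : (β ^ q - α) * (u ^ q + u) = 0 := by linear_combination h - u * hE
    rcases mul_eq_zero.mp h2 with h3 | h3
    · exact absurd h3 hβqα
    · exact h3
  have hβα : β - α ≠ 0 := by
    intro h
    apply hrank2
    rw [sub_eq_zero.mp h]
  -- the polynomial part lands in F_q
  have hGV : ∀ x : F,
      ((x ^ q + x) ^ m + ∑ i ∈ Finset.Ico 2 m, a i * (x ^ q + x) ^ i) ^ q
      = (x ^ q + x) ^ m + ∑ i ∈ Finset.Ico 2 m, a i * (x ^ q + x) ^ i := by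
    intro x
    have hs : (x ^ q + x) ^ q = x ^ q + x := by rw [hadd, hQQ]; ring
    have := map_add φ ((x ^ q + x) ^ m) (∑ i ∈ Finset.Ico 2 m, a i * (x ^ q + x) ^ i)
    rw [hφ] at this
    rw [this, map_pow, map_sum]
    congr 1
    · rw [hφ, hs]
    · refine Finset.sum_congr rfl fun i _ => ?_
      rw [map_mul, map_pow, hφ, hφ, ha, hs]
  -- conclude
  rw [Fintype.bijective_iff_injective_and_card]
  refine ⟨?_, rfl⟩
  intro x y hfeq
  simp only at hfeq
  set u : F := x - y with hudef
  have hLsub : L x - L y = L u := by rw [hL]; simp only; rw [hudef, hsub]; ring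
  have hLuV : (L u) ^ q = L u := by
    have hLu : L u = ((y ^ q + y) ^ m + ∑ i ∈ Finset.Ico 2 m, a i * (y ^ q + y) ^ i)
        - ((x ^ q + x) ^ m + ∑ i ∈ Finset.Ico 2 m, a i * (x ^ q + x) ^ i) := by
      rw [← hLsub]; linear_combination hfeq
    rw [hLu, hsub, hGV, hGV]
  have huK : u ^ q + u = 0 := key u hLuV
  have hsxy : x ^ q + x = y ^ q + y := by
    have : (x - y) ^ q + (x - y) = 0 := by rw [← hudef]; exact huK
    rw [hsub] at this
    linear_combination this
  have hGxy : (x ^ q + x) ^ m + ∑ i ∈ Finset.Ico 2 m, a i * (x ^ q + x) ^ i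
      = (y ^ q + y) ^ m + ∑ i ∈ Finset.Ico 2 m, a i * (y ^ q + y) ^ i := by
    rw [hsxy]
  have hLxy : L x = L y := by linear_combination hfeq - hGxy
  have hLu0 : L u = 0 := by rw [← hLsub, hLxy]; ring
  have huq : u ^ q = -u := by
    have := huK; linear_combination this
  rw [hL] at hLu0
  simp only at hLu0
  rw [huq] at hLu0
  have : (β - α) * u = 0 := by linear_combination hLu0
  rcases mul_eq_zero.mp this with h | h
  · exact absurd h hβα
  · exact sub_eq_zero.mp (by rw [← hudef]; exact h)
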